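/- Let δ be a finite C-sequence dataset, and let L, L' be L-sequences with L an L-subsequence of L', and let k', k be positive integers with |L'| ≤ k' ≤ k. Then LWU_{k'}(L') ≤ LWU_k(L). -/

import Mathlib

open scoped Classical

/-- A C-eventset: a finite set of event labels together with a duration. -/
abbrev CEventset (α : Type*) := Finset α × ℕ

/-- A C-sequence: a finite list of C-eventsets. -/
abbrev CSeq (α : Type*) := List (CEventset α)

/-- An L-sequence: a finite list of (nonempty) finite label sets. -/
abbrev LSeq (α : Type*) := List (Finset α)

/-- Utility of a C-eventset: duration times the sum of external utilities of its labels. -/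
noncomputable def ue {α : Type*} (p : α → NNReal) (σ : CEventset α) : NNReal :=
  (σ.2 : NNReal) * ∑ l ∈ σ.1, p l

/-- Utility of a C-sequence: the sum of the utilities of its C-eventsets. -/
noncomputable def us {α : Type*} (p : α → NNReal) (C : CSeq α) : NNReal :=
  (C.map (ue p)).sum

/-- Containment of C-eventsets: label-set inclusion with equal durations. -/
def CContains {α : Type*} (σa σb : CEventset α) : Prop :=
  σa.1 ⊆ σb.1 ∧ σa.2 = σb.2

/-- `C` is a C-subsequence of `C'`: there is a strictly increasing index map under
which each C-eventset of `C` is contained in the corresponding one of `C'`. -/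
def CSub {α : Type*} (C C' : CSeq α) : Prop :=
  ∃ C₂ : CSeq α, C₂.Sublist C' ∧ List.Forall₂ CContains C C₂

/-- A C-sequence matches an L-sequence iff they have equal length and the label set of
each C-eventset equals the corresponding label set of the L-sequence. -/
def Matches {α : Type*} (C : CSeq α) (L : LSeq α) : Prop :=
  C.map Prod.fst = L

/-- `L` is an L-subsequence of `L'`. -/
def LSub {α : Type*} (L L' : LSeq α) : Prop :=
  ∃ L₂ : LSeq α, L₂.Sublist L' ∧ List.Forall₂ (· ⊆ ·) L L₂

/-- Maximum of the utility set `u_l(L, C)` (max of the empty set is 0). -/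
noncomputable def ulMax {α : Type*} (p : α → NNReal) (L : LSeq α) (C : CSeq α) : NNReal :=
  sSup {x | ∃ C', Matches C' L ∧ CSub C' C ∧ us p C' = x}

/-- Maximum utility `u_max(L)` of an L-sequence in a C-sequence dataset. -/
noncomputable def umax {α : Type*} (p : α → NNReal) (δ : Finset (CSeq α)) (L : LSeq α) :
    NNReal :=
  ∑ C ∈ δ, ulMax p L C

/-- Maximum utility of `k` C-eventsets in a C-sequence (max of the empty set is 0). -/
noncomputable def umaxk {α : Type*} (p : α → NNReal) (C : CSeq α) (k : ℕ) : NNReal :=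
  sSup {x | ∃ C', CSub C' C ∧ C'.length ≤ k ∧ us p C' = x}

/-- L-sequence-weighted utilization `LWU_k(L)` over the dataset `δ`. -/
noncomputable def LWU {α : Type*} (p : α → NNReal) (δ : Finset (CSeq α)) (k : ℕ)
    (L : LSeq α) : NNReal :=
  ∑ C ∈ δ, if ∃ C', CSub C' C ∧ Matches C' L then umaxk p C k else 0

/-- Projected utilization `P_k(L) = u_max(L) + LWU_{k - |L|}(L)`. -/
noncomputable def Pk {α : Type*} (p : α → NNReal) (δ : Finset (CSeq α)) (k : ℕ)
    (L : LSeq α) : NNReal :=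
  umax p δ L + LWU p δ (k - L.length) L


instance {α : Type*} : IsRefl (CEventset α) CContains :=
  ⟨fun σ => ⟨le_refl _, rfl⟩⟩

instance {α : Type*} : IsTrans (CEventset α) CContains :=
  ⟨fun _ _ _ h₁ h₂ => ⟨h₁.1.trans h₂.1, h₁.2.trans h₂.2⟩⟩

theorem csub_iff {α : Type*} {C C' : CSeq α} :
    CSub C C' ↔ List.SublistForall₂ CContains C C' := by
  rw [List.sublistForall₂_iff]
  constructor
  · rintro ⟨C₂, h1, h2⟩; exact ⟨C₂, h2, h1⟩
  · rintro ⟨C₂, h1, h2⟩; exact ⟨C₂, h2, h1⟩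

theorem csub_trans {α : Type*} {A B C : CSeq α} (h1 : CSub A B) (h2 : CSub B C) :
    CSub A C :=
  csub_iff.2 (Trans.trans (csub_iff.1 h1) (csub_iff.1 h2))

theorem us_le_of_forall₂ {α : Type*} (p : α → NNReal) {A B : CSeq α}
    (h : List.Forall₂ CContains A B) : us p A ≤ us p B := by
  induction h with
  | nil => exact le_refl _
  | cons hab _ ih =>
    simp only [us, List.map_cons, List.sum_cons]
    refine add_le_add ?_ ih
    unfold ue
    rw [hab.2]
    exact mul_le_mul_right (Finset.sum_le_sum_of_subset hab.1) _

theorem us_le_of_sublist {α : Type*} (p : α → NNReal) {A B : CSeq α}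
    (h : A.Sublist B) : us p A ≤ us p B :=
  List.Sublist.sum_le_sum (h.map (ue p)) (fun a _ => zero_le)

theorem us_le_of_csub {α : Type*} (p : α → NNReal) {A B : CSeq α}
    (h : CSub A B) : us p A ≤ us p B := by
  obtain ⟨C₂, hs, hf⟩ := h
  exact (us_le_of_forall₂ p hf).trans (us_le_of_sublist p hs)

theorem umaxk_mono {α : Type*} (p : α → NNReal) (C : CSeq α) {k k' : ℕ}
    (h : k' ≤ k) : umaxk p C k' ≤ umaxk p C k := by
  apply csSup_le_csSup
  · exact ⟨us p C, fun x hx => by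
      obtain ⟨C', hc, _, rfl⟩ := hx; exact us_le_of_csub p hc⟩
  · exact ⟨0, [], ⟨[], List.nil_sublist _, List.Forall₂.nil⟩, by simp, by simp [us]⟩
  · rintro x ⟨C', hc, hl, rfl⟩
    exact ⟨C', hc, hl.trans h, rfl⟩

theorem exists_match_of_lsub {α : Type*} {L L' : LSeq α} {C C' : CSeq α}
    (hsub : LSub L L') (hm : Matches C' L') (hc : CSub C' C) :
    ∃ C'', CSub C'' C ∧ Matches C'' L := by
  obtain ⟨L₂, hL₂sub, hL₂⟩ := hsub
  rw [← hm] at hL₂sub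
  obtain ⟨C₂, hC₂sub, rfl⟩ := List.sublist_map_iff.mp hL₂sub
  rw [List.forall₂_map_right_iff] at hL₂
  -- build C'' from L and the durations of C₂
  have key : ∀ (M : LSeq α) (D : CSeq α), List.Forall₂ (fun c (σ : CEventset α) => c ⊆ σ.1) M D →
      ∃ E : CSeq α, E.map Prod.fst = M ∧ List.Forall₂ CContains E D := by
    intro M D h
    induction h with
    | nil => exact ⟨[], rfl, List.Forall₂.nil⟩
    | @cons c σ M D hcs _ ih =>
      obtain ⟨E, hE1, hE2⟩ := ih
      exact ⟨(c, σ.2) :: E, by simp [hE1], List.Forall₂.cons ⟨hcs, rfl⟩ hE2⟩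
  obtain ⟨E, hE1, hE2⟩ := key L C₂ hL₂
  refine ⟨E, ?_, hE1⟩
  have h1 : CSub E C₂ := ⟨C₂, List.Sublist.refl _, hE2⟩
  have h2 : CSub C₂ C' := ⟨C₂, hC₂sub, List.forall₂_refl _⟩
  exact csub_trans h1 (csub_trans h2 hc)

/-- if L ⊑ L' and |L'| ≤ k' ≤ k then LWU_{k'}(L') ≤ LWU_k(L). -/
theorem LWU_anti_mono {α : Type*} (p : α → NNReal) (δ : Finset (CSeq α))
    (L L' : LSeq α) (hL : ∀ c ∈ L, c.Nonempty) (hL' : ∀ c ∈ L', c.Nonempty)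
    (hsub : LSub L L') (k' k : ℕ) (hk' : 0 < k') (hk : 0 < k)
    (hlen : L'.length ≤ k') (hk'k : k' ≤ k) :
    LWU p δ k' L' ≤ LWU p δ k L := by
  unfold LWU
  apply Finset.sum_le_sum
  intro C _
  split_ifs with h1 h2
  · exact umaxk_mono p C hk'k
  · obtain ⟨C', hc, hm⟩ := h1
    obtain ⟨C'', hc'', hm''⟩ := exists_match_of_lsub hsub hm hc
    exact absurd ⟨C'', hc'', hm''⟩ h2
  · exact zero_le
  · exact le_refl _
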